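/- Let K be a group, let Z ≤ Z(K) be a central subgroup with K/Z abelian, and let A, B be subgroups of K of exponent dividing 2 such that K = A·B·Z. Then the commutator subgroup [K,K] is abelian of exponent dividing 2 (an elementary abelian 2-group if nontrivial). -/

import Mathlib

open scoped commutatorElement

/-- If `Z ≤ Z(K)` with `K/Z` abelian (all commutators in `Z`) and `A, B` are
subgroups of exponent dividing 2 with `K = A·B·Z`, then `[K,K]` is abelian of
exponent dividing 2. -/
theorem commutator_subgroup_elementary_abelian {K : Type*} [Group K]
    (Z : Subgroup K) (hZ : Z ≤ Subgroup.center K)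
    (hcomm : ∀ g h : K, g⁻¹ * h⁻¹ * g * h ∈ Z) (A B : Subgroup K)
    (hA2 : ∀ x ∈ A, x ^ 2 = 1) (hB2 : ∀ x ∈ B, x ^ 2 = 1)
    (hfact : ∀ g : K, ∃ a ∈ A, ∃ b ∈ B, ∃ z ∈ Z, g = a * b * z) :
    (∀ x ∈ commutator K, ∀ y ∈ commutator K, x * y = y * x) ∧
      (∀ x ∈ commutator K, x ^ 2 = 1) := by
  -- every commutator lies in Z
  have hZc : ∀ g h : K, ⁅g, h⁆ ∈ Z := by
    intro g h
    have := hcomm g⁻¹ h⁻¹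
    simpa [commutatorElement_def, mul_assoc] using this
  -- commutators are central
  have hcent : ∀ g h k : K, ⁅g, h⁆ * k = k * ⁅g, h⁆ := fun g h k =>
    ((Subgroup.mem_center_iff.mp (hZ (hZc g h))) k).symm
  -- left bilinearity
  have hmul_left : ∀ g h k : K, ⁅g * h, k⁆ = ⁅g, k⁆ * ⁅h, k⁆ := by
    intro g h k
    have h1 : ⁅g * h, k⁆ = g * ⁅h, k⁆ * g⁻¹ * ⁅g, k⁆ := by group
    calc ⁅g * h, k⁆ = g * ⁅h, k⁆ * g⁻¹ * ⁅g, k⁆ := h1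
      _ = g * (⁅h, k⁆ * g⁻¹) * ⁅g, k⁆ := by rw [mul_assoc g]
      _ = g * (g⁻¹ * ⁅h, k⁆) * ⁅g, k⁆ := by rw [hcent h k g⁻¹]
      _ = ⁅h, k⁆ * ⁅g, k⁆ := by group
      _ = ⁅g, k⁆ * ⁅h, k⁆ := hcent h k ⁅g, k⁆
  -- right bilinearity
  have hmul_right : ∀ g h k : K, ⁅g, h * k⁆ = ⁅g, h⁆ * ⁅g, k⁆ := by
    intro g h k
    have h1 : ⁅g, h * k⁆ = ⁅g, h⁆ * (h * ⁅g, k⁆ * h⁻¹) := by group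
    calc ⁅g, h * k⁆ = ⁅g, h⁆ * (h * ⁅g, k⁆ * h⁻¹) := h1
      _ = ⁅g, h⁆ * (h * (⁅g, k⁆ * h⁻¹)) := by rw [mul_assoc h]
      _ = ⁅g, h⁆ * (h * (h⁻¹ * ⁅g, k⁆)) := by rw [hcent g k h⁻¹]
      _ = ⁅g, h⁆ * ⁅g, k⁆ := by group
  -- commutators with central elements vanish
  have hz_right : ∀ (g : K), ∀ z ∈ Z, ⁅g, z⁆ = 1 := by
    intro g z hz
    have hc := Subgroup.mem_center_iff.mp (hZ hz) g
    -- hc : g * z = z * g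
    simp [commutatorElement_def]
    rw [hc]
    group
  have hz_left : ∀ (g : K), ∀ z ∈ Z, ⁅z, g⁆ = 1 := by
    intro g z hz
    have hc := Subgroup.mem_center_iff.mp (hZ hz) g
    simp [commutatorElement_def]
    rw [← hc]
    group
  -- square of a commutator with an involution
  have hsq : ∀ x y : K, y ^ 2 = 1 → ⁅x, y⁆ ^ 2 = 1 := by
    intro x y hy
    have h1 : ⁅x, y * y⁆ = ⁅x, y⁆ * ⁅x, y⁆ := hmul_right x y y
    have h2 : y * y = 1 := by rw [← pow_two]; exact hy
    rw [h2] at h1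
    simp at h1
    rw [pow_two, ← h1]
  -- product of an involution with a central involution is an involution
  have hmulsq : ∀ p q : K, (∀ k, q * k = k * q) → p ^ 2 = 1 → q ^ 2 = 1 →
      (p * q) ^ 2 = 1 := by
    intro p q hq hp hq2
    have : p * q * (p * q) = p * p * (q * q) := by
      rw [mul_assoc p q, ← mul_assoc q p, hq p]
      group
    rw [pow_two, this, ← pow_two, ← pow_two, hp, hq2, one_mul]
  have hle : commutator K ≤ Z := by
    rw [commutator_def, Subgroup.commutator_le]
    intro g _ h _
    exact hZc g h
  constructor
  · intro x hx y _
    exact (Subgroup.mem_center_iff.mp (hZ (hle hx)) y).symm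
  · -- subgroup of central involutions
    let H : Subgroup K :=
    { carrier := {x | (∀ k, x * k = k * x) ∧ x ^ 2 = 1}
      one_mem' := ⟨fun k => by simp, one_pow 2⟩
      mul_mem' := by
        rintro a b ⟨hac, ha⟩ ⟨hbc, hb⟩
        refine ⟨fun k => by rw [mul_assoc, hbc k, ← mul_assoc, hac k, mul_assoc], ?_⟩
        exact hmulsq a b hbc ha hb
      inv_mem' := by
        rintro a ⟨hac, ha⟩
        refine ⟨fun k => ?_, by rw [inv_pow, ha, inv_one]⟩
        calc a⁻¹ * k = a⁻¹ * k * a * a⁻¹ := by group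
          _ = a⁻¹ * (k * a) * a⁻¹ := by rw [mul_assoc a⁻¹ k a]
          _ = a⁻¹ * (a * k) * a⁻¹ := by rw [hac k]
          _ = k * a⁻¹ := by group }
    have hleH : commutator K ≤ H := by
      rw [commutator_def, Subgroup.commutator_le]
      intro g _ h _
      refine ⟨hcent g h, ?_⟩
      obtain ⟨a, ha, b, hb, z, hz, rfl⟩ := hfact g
      obtain ⟨a', ha', b', hb', z', hz', rfl⟩ := hfact h
      rw [hmul_left (a * b) z, hz_left _ _ hz, mul_one,
          hmul_right (a * b) (a' * b') z', hz_right _ _ hz', mul_one,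
          hmul_left a b (a' * b'), hmul_right a a' b', hmul_right b a' b']
      apply hmulsq _ _ (fun k => by
        rw [mul_assoc, hcent b b' k, ← mul_assoc, hcent b a' k, mul_assoc])
      · apply hmulsq _ _ (fun k => hcent a b' k)
        · exact hsq a a' (hA2 a' ha')
        · exact hsq a b' (hB2 b' hb')
      · apply hmulsq _ _ (fun k => hcent b b' k)
        · exact hsq b a' (hA2 a' ha')
        · exact hsq b b' (hB2 b' hb')
    intro x hx
    exact (hleH hx).2
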